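/- Let G be a multiplicative group, S a finite non-empty subset, and X a finite non-empty subset minimizing K := |X·S|/|X| among non-empty subsets of a given finite set A ⊇ X. With c(Y) := |Y·S| − K|Y|, one has c(gX ∪ Z) ≤ c(Z) for every g ∈ G and every finite subset Z of G. -/

import Mathlib

open scoped Pointwise

theorem petridis_step {G : Type*} [Group G] [DecidableEq G]
    (A S X : Finset G) (hS : S.Nonempty) (hX : X.Nonempty) (hXA : X ⊆ A)
    (K : ℝ) (hK : K = ((X * S).card : ℝ) / X.card)
    (hmin : ∀ Y ⊆ A, Y.Nonempty → K ≤ ((Y * S).card : ℝ) / Y.card)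
    (g : G) (Z : Finset G) :
    (((g • X ∪ Z) * S).card : ℝ) - K * (g • X ∪ Z).card
      ≤ ((Z * S).card : ℝ) - K * Z.card := by
  classical
  set W : Finset G := X ∩ g⁻¹ • Z with hW
  have hWX : W ⊆ X := Finset.inter_subset_left
  have hgW : g • X ∩ Z = g • W := by
    rw [hW, Finset.smul_finset_inter, smul_inv_smul]
  -- c(W) ≥ 0
  have hcW : (0:ℝ) ≤ ((W * S).card : ℝ) - K * W.card := by
    rcases W.eq_empty_or_nonempty with h | h
    · simp [h]
    · have hm := hmin W (hWX.trans hXA) h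
      have hWpos : (0:ℝ) < (W.card : ℝ) := by exact_mod_cast h.card_pos
      have := (le_div_iff₀ hWpos).mp hm
      linarith
  -- K * |X| = |X*S|
  have hKX : K * (X.card : ℝ) = ((X * S).card : ℝ) := by
    have hXpos : (X.card : ℝ) ≠ 0 := by
      exact_mod_cast hX.card_pos.ne'
    rw [hK, div_mul_cancel₀ _ hXpos]
  -- rewrite (g • X) * S = g • (X * S)
  have hsm : (g • X) * S = g • (X * S) := smul_mul_assoc g X S
  -- subset: g • (W * S) ⊆ g • (X * S) ∩ (Z * S)
  have hsub : g • (W * S) ⊆ (g • (X * S)) ∩ (Z * S) := by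
    intro a ha
    rw [Finset.mem_inter]
    constructor
    · exact Finset.smul_finset_subset_smul_finset
        (Finset.mul_subset_mul_right hWX) ha
    · have : g • (W * S) = (g • W) * S := (smul_mul_assoc g W S).symm
      rw [this] at ha
      have hgWZ : g • W ⊆ Z := by
        rw [← hgW]; exact Finset.inter_subset_right
      exact Finset.mul_subset_mul_right hgWZ ha
  -- card of product set bound
  have hcardS : ((W * S).card : ℝ) ≤ (((g • (X * S)) ∩ (Z * S)).card : ℝ) := by
    have : (g • (W * S)).card ≤ ((g • (X * S)) ∩ (Z * S)).card :=
      Finset.card_le_card hsub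
    rw [Finset.card_smul_finset] at this
    exact_mod_cast this
  have hunion : ((g • (X * S)) ∪ (Z * S)).card + ((g • (X * S)) ∩ (Z * S)).card
      = (g • (X * S)).card + (Z * S).card := Finset.card_union_add_card_inter _ _
  have hLHS : (((g • X ∪ Z) * S).card : ℝ)
      ≤ ((X * S).card : ℝ) + ((Z * S).card : ℝ)
        - (((g • (X * S)) ∩ (Z * S)).card : ℝ) := by
    have hrw : (g • X ∪ Z) * S = (g • (X * S)) ∪ (Z * S) := by
      rw [Finset.union_mul, hsm]
    have hsmcard : (g • (X * S)).card = (X * S).card := Finset.card_smul_finset g _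
    rw [hrw]
    have := hunion
    rw [hsmcard] at this
    have : (((g • (X * S)) ∪ (Z * S)).card : ℝ) + (((g • (X * S)) ∩ (Z * S)).card : ℝ)
        = ((X * S).card : ℝ) + ((Z * S).card : ℝ) := by exact_mod_cast this
    linarith
  -- card of union
  have hcardU : ((g • X ∪ Z).card : ℝ) = (X.card : ℝ) + (Z.card : ℝ) - (W.card : ℝ) := by
    have h1 : (g • X ∪ Z).card + (g • X ∩ Z).card = (g • X).card + Z.card :=
      Finset.card_union_add_card_inter _ _
    rw [hgW, Finset.card_smul_finset, Finset.card_smul_finset] at h1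
    have : ((g • X ∪ Z).card : ℝ) + (W.card : ℝ) = (X.card : ℝ) + (Z.card : ℝ) := by
      exact_mod_cast h1
    linarith
  rw [hcardU]
  nlinarith [hcW, hLHS, hcardS, hKX]
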